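/- arXiv:1003.4301 — 3 statements merged into one kernel-verified Lean document; each statement's English description precedes it below -/
import Mathlib

section
/- For an odd integer m with 1 ≤ m ≤ 2^n − 1, the fraction m/2^n has at least n+1 distinct EXB codes. -/
def exbNext (x : ℤ) : ℤ := if x % 4 = 3 then (x - 1) / 2 else (x + 1) / 2

def exbSeq (m : ℤ) : ℕ → ℤ
  | 0 => m
  | t + 1 => exbNext (exbSeq m t)

def exbD (m : ℤ) (t : ℕ) : ℤ := exbSeq m t - 2 * exbSeq m (t + 1)

lemma exbNext_spec (x : ℤ) (hx : x % 2 = 1) :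
    (exbNext x) % 2 = 1 ∧ (x - 2 * exbNext x = 1 ∨ x - 2 * exbNext x = -1) := by
  unfold exbNext; split <;> omega

lemma exbSeq_inv (n : ℕ) (m : ℤ) (hm : m % 2 = 1) (h1 : 1 ≤ m) (h2 : m ≤ 2 ^ n) :
    ∀ t, t ≤ n → (exbSeq m t) % 2 = 1 ∧ 1 ≤ exbSeq m t ∧ exbSeq m t ≤ 2 ^ (n - t) := by
  intro t
  induction t with
  | zero => intro _; simpa [exbSeq] using ⟨hm, h1, h2⟩
  | succ t ih =>
    intro ht
    obtain ⟨ho, hl, hu⟩ := ih (by omega)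
    obtain ⟨ho', hd⟩ := exbNext_spec _ ho
    have hp : (2 : ℤ) ^ (n - t) = 2 * 2 ^ (n - (t + 1)) := by
      rw [← pow_succ']; congr 1; omega
    have : exbSeq m (t+1) = exbNext (exbSeq m t) := rfl
    refine ⟨by rwa [this], ?_, ?_⟩ <;> omega

lemma sum_exbD (m : ℤ) (t : ℕ) :
    ∑ i ∈ Finset.range t, exbD m i * 2 ^ i = m - 2 ^ t * exbSeq m t := by
  induction t with
  | zero => simp [exbSeq]
  | succ t ih =>
    rw [Finset.sum_range_succ, ih, exbD, pow_succ]
    ring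

lemma emod_pow_succ (u : ℤ) (s : ℕ) :
    u % 2 ^ (s+1) = u % 2 ^ s + u / 2 ^ s % 2 * 2 ^ s := by
  have h1 : (0:ℤ) < 2 ^ s := by positivity
  have hqr := Int.mul_ediv_add_emod u (2 ^ s)
  have hr0 : 0 ≤ u % 2 ^ s := Int.emod_nonneg u (by positivity)
  have hr1 : u % 2 ^ s < 2 ^ s := Int.emod_lt_of_pos u h1
  have hq := Int.mul_ediv_add_emod (u / 2 ^ s) 2
  have h2 : (0:ℤ) ≤ u / 2 ^ s % 2 ∧ u / 2 ^ s % 2 < 2 :=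
    ⟨Int.emod_nonneg _ (by norm_num), Int.emod_lt_of_pos _ (by norm_num)⟩
  have key : u = (u % 2 ^ s + u / 2 ^ s % 2 * 2 ^ s) + 2 ^ (s+1) * (u / 2 ^ s / 2) := by
    rw [pow_succ]; nlinarith [hqr, hq]
  have e1 : ((u % 2 ^ s + u / 2 ^ s % 2 * 2 ^ s) + 2 ^ (s+1) * (u / 2 ^ s / 2)) % 2 ^ (s+1)
      = (u % 2 ^ s + u / 2 ^ s % 2 * 2 ^ s) % 2 ^ (s+1) :=
    Int.add_mul_emod_self_left _ _ _
  have e2 : (u % 2 ^ s + u / 2 ^ s % 2 * 2 ^ s) % 2 ^ (s+1)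
      = u % 2 ^ s + u / 2 ^ s % 2 * 2 ^ s := by
    apply Int.emod_eq_of_lt
    · nlinarith [h2.1]
    · rw [pow_succ]; nlinarith [h2.2, hr1]
  rw [← e2, ← e1, ← key]

lemma bits_sum (u : ℤ) (s : ℕ) :
    ∑ k ∈ Finset.range s, (u / 2 ^ k % 2) * 2 ^ k = u % 2 ^ s := by
  induction s with
  | zero => simp
  | succ s ih => rw [Finset.sum_range_succ, ih, emod_pow_succ]

def exbDigit (n : ℕ) (m : ℤ) (t : ℕ) (i : ℕ) : ℤ :=
  if i < t then exbD m i
  else if i = t then (if t = n then exbSeq m n else 2 * exbSeq m (t+1) - exbSeq m t)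
  else (exbSeq m t - exbSeq m (t+1)) / 2 ^ (i - t - 1) % 2

lemma exb_sum (n : ℕ) (m : ℤ) (hm : m % 2 = 1) (h1 : 1 ≤ m) (h2 : m ≤ 2 ^ n)
    (t : ℕ) (ht : t ≤ n) :
    ∑ i ∈ Finset.range (n+1), exbDigit n m t i * 2 ^ i = m := by
  have hInv := exbSeq_inv n m hm h1 h2
  rcases eq_or_lt_of_le ht with rfl | htn
  · rw [Finset.sum_range_succ]
    have e1 : ∀ i ∈ Finset.range t, exbDigit t m t i * 2 ^ i = exbD m i * 2 ^ i := by
      intro i hi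
      rw [Finset.mem_range] at hi
      simp [exbDigit, hi]
    rw [Finset.sum_congr rfl e1, sum_exbD]
    have : exbDigit t m t t = exbSeq m t := by simp [exbDigit]
    rw [this]; ring
  · -- t < n
    obtain ⟨ho, hl, hu⟩ := hInv t ht
    obtain ⟨ho', hl', hu'⟩ := hInv (t+1) (by omega)
    have hd : exbSeq m t - 2 * exbSeq m (t+1) = 1 ∨ exbSeq m t - 2 * exbSeq m (t+1) = -1 :=
      (exbNext_spec _ ho).2
    have hsplit : ∑ i ∈ Finset.range (n+1), exbDigit n m t i * 2 ^ i
        = ∑ i ∈ Finset.range (t+1), exbDigit n m t i * 2 ^ i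
          + ∑ i ∈ Finset.Ico (t+1) (n+1), exbDigit n m t i * 2 ^ i := by
      rw [Finset.range_eq_Ico, ← Finset.sum_Ico_consecutive _ (by omega : 0 ≤ t+1) (by omega : t+1 ≤ n+1), Finset.range_eq_Ico]
    rw [hsplit, Finset.sum_range_succ]
    have e1 : ∀ i ∈ Finset.range t, exbDigit n m t i * 2 ^ i = exbD m i * 2 ^ i := by
      intro i hi
      rw [Finset.mem_range] at hi
      simp [exbDigit, hi]
    rw [Finset.sum_congr rfl e1, sum_exbD]
    have e2 : exbDigit n m t t = 2 * exbSeq m (t+1) - exbSeq m t := by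
      simp [exbDigit]; omega
    rw [e2]
    have e3 : ∑ i ∈ Finset.Ico (t+1) (n+1), exbDigit n m t i * 2 ^ i
        = 2 ^ (t+1) * ((exbSeq m t - exbSeq m (t+1)) % 2 ^ (n - t)) := by
      rw [Finset.sum_Ico_eq_sum_range]
      have : n + 1 - (t + 1) = n - t := by omega
      rw [this, ← bits_sum (exbSeq m t - exbSeq m (t+1)) (n - t), Finset.mul_sum]
      apply Finset.sum_congr rfl
      intro k hk
      have e4 : exbDigit n m t (t + 1 + k) = (exbSeq m t - exbSeq m (t+1)) / 2 ^ k % 2 := by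
        have h5 : t + 1 + k - t - 1 = k := by omega
        rw [exbDigit, if_neg (by omega), if_neg (by omega), h5]
      rw [e4, pow_add, pow_succ]
      ring
    rw [e3]
    have hev : (exbSeq m t - exbSeq m (t+1)) % 2 ^ (n - t) = exbSeq m t - exbSeq m (t+1) := by
      apply Int.emod_eq_of_lt <;> omega
    rw [hev]
    have hps : (2:ℤ) ^ (n - t + 1) = 2 * 2 ^ (n - t) := by rw [pow_succ]; ring
    have hp2 : (2:ℤ) ^ (t+1) = 2 * 2 ^ t := by rw [pow_succ]; ring
    rw [hp2]; ring

lemma exbSeq_n (n : ℕ) (m : ℤ) (hm : m % 2 = 1) (h1 : 1 ≤ m) (h2 : m ≤ 2 ^ n) :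
    exbSeq m n = 1 := by
  obtain ⟨ho, hl, hu⟩ := exbSeq_inv n m hm h1 h2 n le_rfl
  simp at hu
  omega

lemma exb_digit_mem (n : ℕ) (m : ℤ) (hm : m % 2 = 1) (h1 : 1 ≤ m) (h2 : m ≤ 2 ^ n)
    (t : ℕ) (ht : t ≤ n) (i : ℕ) :
    exbDigit n m t i = -1 ∨ exbDigit n m t i = 0 ∨ exbDigit n m t i = 1 := by
  have hInv := exbSeq_inv n m hm h1 h2
  unfold exbDigit
  split
  · next hit =>
    have := (exbNext_spec _ (hInv i (by omega)).1).2
    have hr : exbSeq m (i+1) = exbNext (exbSeq m i) := rfl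
    unfold exbD
    omega
  · split
    · split
      · next h => rw [exbSeq_n n m hm h1 h2]; omega
      · next h =>
        have := (exbNext_spec _ (hInv t ht).1).2
        have hr : exbSeq m (t+1) = exbNext (exbSeq m t) := rfl
        omega
    · have := Int.emod_nonneg ((exbSeq m t - exbSeq m (t+1)) / 2 ^ (i - t - 1)) (by norm_num : (2:ℤ) ≠ 0)
      have := Int.emod_lt_of_pos ((exbSeq m t - exbSeq m (t+1)) / 2 ^ (i - t - 1)) (by norm_num : (0:ℤ) < 2)
      omega

lemma exb_digit_top (n : ℕ) (m : ℤ) (hm : m % 2 = 1) (h1 : 1 ≤ m) (h2 : m ≤ 2 ^ n)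
    (t : ℕ) (ht : t ≤ n) :
    exbDigit n m t n = 0 ∨ exbDigit n m t n = 1 := by
  unfold exbDigit
  split
  · omega
  · split
    · next h =>
      have : t = n := by omega
      rw [if_pos this, exbSeq_n n m hm h1 h2]; omega
    · have := Int.emod_nonneg ((exbSeq m t - exbSeq m (t+1)) / 2 ^ (n - t - 1)) (by norm_num : (2:ℤ) ≠ 0)
      have := Int.emod_lt_of_pos ((exbSeq m t - exbSeq m (t+1)) / 2 ^ (n - t - 1)) (by norm_num : (0:ℤ) < 2)
      omega

lemma exb_digit_ne (n : ℕ) (m : ℤ) (hm : m % 2 = 1) (h1 : 1 ≤ m) (h2 : m ≤ 2 ^ n)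
    (t t' : ℕ) (htt : t < t') (ht' : t' ≤ n) :
    exbDigit n m t t ≠ exbDigit n m t' t := by
  have hInv := exbSeq_inv n m hm h1 h2
  have hd := (exbNext_spec _ (hInv t (by omega)).1).2
  have hr : exbSeq m (t+1) = exbNext (exbSeq m t) := rfl
  have e1 : exbDigit n m t t = 2 * exbSeq m (t+1) - exbSeq m t := by
    rw [exbDigit, if_neg (by omega), if_pos rfl, if_neg (by omega)]
  have e2 : exbDigit n m t' t = exbSeq m t - 2 * exbSeq m (t+1) := by
    rw [exbDigit, if_pos htt]; rfl
  rw [e1, e2]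
  omega

/-- For odd m with 1 ≤ m ≤ 2^n - 1, the fraction m/2^n has at least n+1 distinct EXB codes. -/
theorem exb_codes_card_ge (n : ℕ) (m : ℤ) (hodd : Odd m) (h1 : 1 ≤ m) (h2 : m ≤ 2 ^ n - 1) :
    n + 1 ≤ Set.ncard {A : Fin (n + 1) → ℤ |
      (A 0 = 0 ∨ A 0 = 1) ∧
      (∀ j : Fin (n + 1), j ≠ 0 → A j = -1 ∨ A j = 0 ∨ A j = 1) ∧
      ∑ j : Fin (n + 1), A j * 2 ^ (n - j.val) = m} := by
  have hm : m % 2 = 1 := Int.odd_iff.mp hodd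
  have h2' : m ≤ 2 ^ n := by linarith
  set S := {A : Fin (n + 1) → ℤ |
      (A 0 = 0 ∨ A 0 = 1) ∧
      (∀ j : Fin (n + 1), j ≠ 0 → A j = -1 ∨ A j = 0 ∨ A j = 1) ∧
      ∑ j : Fin (n + 1), A j * 2 ^ (n - j.val) = m} with hS
  set f : Fin (n + 1) → (Fin (n + 1) → ℤ) :=
    fun t j => exbDigit n m t.val (n - j.val) with hf
  have hsub : Set.range f ⊆ S := by
    rintro A ⟨t, rfl⟩
    have ht : t.val ≤ n := by omega
    refine ⟨?_, ?_, ?_⟩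
    · show exbDigit n m t.val (n - (0 : Fin (n+1)).val) = 0 ∨ _
      simp only [Fin.val_zero, Nat.sub_zero]
      exact exb_digit_top n m hm h1 h2' t.val ht
    · intro j _
      exact exb_digit_mem n m hm h1 h2' t.val ht (n - j.val)
    · show ∑ j : Fin (n+1), exbDigit n m t.val (n - j.val) * 2 ^ (n - j.val) = m
      rw [Fin.sum_univ_eq_sum_range (fun j => exbDigit n m t.val (n - j) * 2 ^ (n - j)) (n+1)]
      have hrefl := Finset.sum_range_reflect (fun i => exbDigit n m t.val i * 2 ^ i) (n+1)
      simp only [Nat.add_sub_cancel] at hrefl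
      rw [hrefl]
      exact exb_sum n m hm h1 h2' t.val ht
  have hinj : Function.Injective f := by
    intro t t' htt
    by_contra hne
    have hvne : t.val ≠ t'.val := fun h => hne (Fin.ext h)
    rcases Nat.lt_or_ge t.val t'.val with hlt | hge
    · have hj : n - t.val < n + 1 := by omega
      have := congrFun htt ⟨n - t.val, hj⟩
      simp only [hf] at this
      rw [show n - (n - t.val) = t.val by omega] at this
      exact exb_digit_ne n m hm h1 h2' t.val t'.val hlt (by omega) this
    · have hlt : t'.val < t.val := by omega
      have hj : n - t'.val < n + 1 := by omega
      have := congrFun htt ⟨n - t'.val, hj⟩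
      simp only [hf] at this
      rw [show n - (n - t'.val) = t'.val by omega] at this
      exact exb_digit_ne n m hm h1 h2' t'.val t.val hlt (by omega) this.symm
  have hfin : S.Finite := by
    apply Set.Finite.subset (Set.Finite.pi (fun i : Fin (n+1) => Set.finite_Icc (-1 : ℤ) 1))
    intro A hA
    rw [Set.mem_pi]
    intro j _
    rcases eq_or_ne j 0 with rfl | hj
    · rcases hA.1 with h | h <;> rw [h] <;> simp
    · rcases hA.2.1 j hj with h | h | h <;> rw [h] <;> simp
  have hcard : (Set.range f).ncard = n + 1 := by
    rw [← Set.image_univ, Set.ncard_image_of_injective _ hinj, Set.ncard_univ,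
      Nat.card_eq_fintype_card, Fintype.card_fin]
  have := Set.ncard_le_ncard hsub hfin
  omega
end

section
/- If (A_0, ..., A_n) is an EXB code of m/2^n with m odd and some A_j = 1 (j ≥ 1), then there exists another EXB code (B_0, ..., B_n) of m/2^n with B_j = -1. -/
lemma exb_geom (n i : ℕ) : ∀ j, i ≤ j → j ≤ n →
    ∑ k ∈ Finset.Icc (i+1) j, (2:ℤ)^(n-k) = 2^(n-i) - 2^(n-j) := by
  intro j hij
  induction j, hij using Nat.le_induction with
  | base => intro _; rw [Finset.Icc_eq_empty (by omega)]; simp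
  | succ j hij ih =>
    intro hjn
    rw [Finset.sum_Icc_succ_top (by omega), ih (by omega)]
    have h1 : n - j = (n - (j+1)) + 1 := by omega
    rw [h1, pow_succ]; ring

/-- If an EXB code of m/2^n (m odd) has A_j = 1 at some position j ≥ 1, then some other
EXB code of the same m/2^n has -1 at position j. -/
theorem exb_code_sign_flip (n : ℕ) (m : ℤ) (hodd : Odd m) (h1 : 1 ≤ m) (h2 : m ≤ 2 ^ n - 1)
    (A : ℕ → ℤ) (hA0 : A 0 = 0 ∨ A 0 = 1)
    (hAdig : ∀ j, 1 ≤ j → j ≤ n → A j = -1 ∨ A j = 0 ∨ A j = 1)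
    (hAsum : A 0 * 2 ^ n + ∑ j ∈ Finset.Icc 1 n, A j * 2 ^ (n - j) = m)
    (j : ℕ) (hj1 : 1 ≤ j) (hjn : j ≤ n) (hAj : A j = 1) :
    ∃ B : ℕ → ℤ, (B 0 = 0 ∨ B 0 = 1) ∧
      (∀ k, 1 ≤ k → k ≤ n → B k = -1 ∨ B k = 0 ∨ B k = 1) ∧
      B 0 * 2 ^ n + ∑ k ∈ Finset.Icc 1 n, B k * 2 ^ (n - k) = m ∧
      B j = -1 := by
  -- Step 1: there is some position i < j with A i ≠ 1.
  have hTne : ∃ i, i < j ∧ A i ≠ 1 := by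
    by_contra hc
    push_neg at hc
    have hA0' : A 0 = 1 := hc 0 (by omega)
    have hones : ∀ k, 1 ≤ k → k ≤ j → A k = 1 := by
      intro k hk1 hk2
      rcases eq_or_lt_of_le hk2 with h | h
      · rw [h]; exact hAj
      · exact hc k h
    have hsplit : Finset.Icc 1 n = Finset.Icc 1 j ∪ Finset.Icc (j+1) n := by
      ext k; simp only [Finset.mem_Icc, Finset.mem_union]; omega
    have hdisj : Disjoint (Finset.Icc 1 j) (Finset.Icc (j+1) n) := by
      rw [Finset.disjoint_left]; intro k hk hk'
      simp only [Finset.mem_Icc] at hk hk'; omega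
    have hhead : ∑ k ∈ Finset.Icc 1 j, A k * 2 ^ (n - k) = 2 ^ n - 2 ^ (n - j) := by
      rw [Finset.sum_congr rfl (fun k hk => by
        simp only [Finset.mem_Icc] at hk
        rw [hones k hk.1 hk.2, one_mul])]
      have := exb_geom n 0 j (by omega) hjn
      simpa using this
    have htail : -(2 ^ (n - j) - 1) ≤ ∑ k ∈ Finset.Icc (j+1) n, A k * 2 ^ (n - k) := by
      have hg := exb_geom n j n hjn le_rfl
      simp only [Nat.sub_self, pow_zero] at hg
      calc -(2 ^ (n - j) - 1) = ∑ k ∈ Finset.Icc (j+1) n, -(2:ℤ) ^ (n - k) := by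
            rw [Finset.sum_neg_distrib, hg]
        _ ≤ ∑ k ∈ Finset.Icc (j+1) n, A k * 2 ^ (n - k) := by
            apply Finset.sum_le_sum
            intro k hk
            simp only [Finset.mem_Icc] at hk
            have hd := hAdig k (by omega) hk.2
            have hpos : (0:ℤ) < 2 ^ (n - k) := by positivity
            rcases hd with h | h | h <;> rw [h] <;> nlinarith
    have hle : (2:ℤ) ^ (n - j) ≤ 2 ^ (n - 1) :=
      pow_le_pow_right₀ (by norm_num) (by omega)
    have hn1 : (2:ℤ) ^ (n - 1) + 2 ^ (n - 1) = 2 ^ n := by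
      obtain ⟨t, rfl⟩ : ∃ t, n = t + 1 := ⟨n - 1, by omega⟩
      rw [Nat.add_sub_cancel, pow_succ]; ring
    rw [hsplit, Finset.sum_union hdisj, hhead, hA0'] at hAsum
    linarith
  -- Step 2: take the largest such i.
  classical
  set T : Finset ℕ := (Finset.range j).filter (fun i => A i ≠ 1) with hT
  have hTne' : T.Nonempty := by
    obtain ⟨i, hi1, hi2⟩ := hTne
    exact ⟨i, by simp [hT, Finset.mem_filter, Finset.mem_range, hi1, hi2]⟩
  set i := T.max' hTne' with hi
  have hiT : i ∈ T := T.max'_mem hTne'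
  have hij : i < j := by
    have := hiT; simp only [hT, Finset.mem_filter, Finset.mem_range] at this; exact this.1
  have hAi : A i ≠ 1 := by
    have := hiT; simp only [hT, Finset.mem_filter, Finset.mem_range] at this; exact this.2
  have hmax : ∀ k, i < k → k < j → A k = 1 := by
    intro k hk1 hk2
    by_contra h
    have hkT : k ∈ T := by simp [hT, Finset.mem_filter, Finset.mem_range, hk2, h]
    have := T.le_max' k hkT
    omega
  have hAi' : A i = 0 ∨ A i = -1 := by
    rcases Nat.eq_zero_or_pos i with h0 | hpos
    · rw [h0] at hAi ⊢; rcases hA0 with h | h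
      · exact Or.inl h
      · exact absurd h hAi
    · rcases hAdig i hpos (by omega) with h | h | h
      · exact Or.inr h
      · exact Or.inl h
      · exact absurd h hAi
  -- Step 3: define B.
  refine ⟨fun k => if k = j then -1 else if k = i then A i + 1
          else if i < k ∧ k < j then 0 else A k, ?_, ?_, ?_, ?_⟩
  · -- B 0 ∈ {0, 1}
    beta_reduce
    rcases Nat.eq_zero_or_pos i with h0 | hpos
    · rw [if_neg (show ¬((0:ℕ) = j) by omega), if_pos h0.symm]
      rcases hAi' with h | h
      · right; rw [h]; norm_num
      · exfalso; rw [h0] at h; rcases hA0 with h' | h' <;> omega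
    · rw [if_neg (show ¬((0:ℕ) = j) by omega), if_neg (show ¬((0:ℕ) = i) by omega),
          if_neg (by omega)]
      exact hA0
  · -- digits
    intro k hk1 hkn
    beta_reduce
    by_cases hkj : k = j
    · rw [if_pos hkj]; left; rfl
    by_cases hki : k = i
    · rw [if_neg hkj, if_pos hki]
      rcases hAi' with h | h
      · right; right; rw [h]; ring
      · right; left; rw [h]; ring
    by_cases hmid : i < k ∧ k < j
    · rw [if_neg hkj, if_neg hki, if_pos hmid]; right; left; rfl
    · rw [if_neg hkj, if_neg hki, if_neg hmid]; exact hAdig k hk1 hkn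
  · -- the sum
    beta_reduce
    rw [← hAsum]
    rcases Nat.eq_zero_or_pos i with h0 | hpos
    · -- case i = 0
      have hA00 : A 0 = 0 := by
        rw [h0] at hAi; rcases hA0 with h | h
        · exact h
        · exact absurd h hAi
      have hdecomp : Finset.Icc 1 n = Finset.Icc 1 j ∪ Finset.Icc (j+1) n := by
        ext k; simp only [Finset.mem_Icc, Finset.mem_union]; omega
      have hdisj : Disjoint (Finset.Icc 1 j) (Finset.Icc (j+1) n) := by
        rw [Finset.disjoint_left]; intro k hk hk'
        simp only [Finset.mem_Icc] at hk hk'; omega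
      rw [hdecomp, Finset.sum_union hdisj, Finset.sum_union hdisj]
      have htail : ∑ k ∈ Finset.Icc (j+1) n,
          (if k = j then (-1:ℤ) else if k = i then A i + 1
           else if i < k ∧ k < j then 0 else A k) * 2 ^ (n - k)
          = ∑ k ∈ Finset.Icc (j+1) n, A k * 2 ^ (n - k) := by
        apply Finset.sum_congr rfl
        intro k hk; simp only [Finset.mem_Icc] at hk
        rw [if_neg (by omega), if_neg (by omega), if_neg (by omega)]
      rw [htail]
      have hd1 : Finset.Icc 1 j = insert j (Finset.Icc 1 (j-1)) := by
        ext k; simp only [Finset.mem_Icc, Finset.mem_insert]; omega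
      have hjnot : j ∉ Finset.Icc 1 (j-1) := by simp only [Finset.mem_Icc]; omega
      rw [hd1, Finset.sum_insert hjnot, Finset.sum_insert hjnot]
      have hmidB : ∑ k ∈ Finset.Icc 1 (j-1),
          (if k = j then (-1:ℤ) else if k = i then A i + 1
           else if i < k ∧ k < j then 0 else A k) * 2 ^ (n - k) = 0 := by
        apply Finset.sum_eq_zero
        intro k hk; simp only [Finset.mem_Icc] at hk
        rw [if_neg (by omega), if_neg (by omega), if_pos (by omega), zero_mul]
      have hmidA : ∑ k ∈ Finset.Icc 1 (j-1), A k * 2 ^ (n - k)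
          = 2 ^ n - 2 ^ (n - j) * 2 := by
        rw [Finset.sum_congr rfl (fun k hk => by
          simp only [Finset.mem_Icc] at hk
          rw [hmax k (by omega) (by omega), one_mul])]
        have hg := exb_geom n 0 (j-1) (by omega) (by omega)
        have he : n - (j - 1) = (n - j) + 1 := by omega
        rw [he, pow_succ] at hg
        simpa using hg
      have hv0 : (if (0:ℕ) = j then (-1:ℤ) else if (0:ℕ) = i then A i + 1
           else if i < 0 ∧ 0 < j then 0 else A 0) = 1 := by
        rw [if_neg (show ¬((0:ℕ) = j) by omega), if_pos h0.symm, h0, hA00, zero_add]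
      have hvj : (if j = j then (-1:ℤ) else if j = i then A i + 1
           else if i < j ∧ j < j then 0 else A j) = -1 := if_pos rfl
      rw [hmidB, hmidA, hv0, hvj, hAj, hA00]
      ring
    · -- case i ≥ 1
      have hB0 : (if (0:ℕ) = j then (-1:ℤ) else if (0:ℕ) = i then A i + 1
           else if i < 0 ∧ 0 < j then 0 else A 0) = A 0 := by
        rw [if_neg (by omega), if_neg (by omega), if_neg (by omega)]
      rw [hB0]
      have hsuff : ∑ k ∈ Finset.Icc 1 n,
          (if k = j then (-1:ℤ) else if k = i then A i + 1
           else if i < k ∧ k < j then 0 else A k) * 2 ^ (n - k)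
          = ∑ k ∈ Finset.Icc 1 n, A k * 2 ^ (n - k) := by
        have hdiff : ∑ k ∈ Finset.Icc 1 n,
            ((if k = j then (-1:ℤ) else if k = i then A i + 1
             else if i < k ∧ k < j then 0 else A k) - A k) * 2 ^ (n - k) = 0 := by
          rw [← Finset.sum_subset (Finset.Icc_subset_Icc (by omega : 1 ≤ i) hjn)
              (fun k hk hk' => by
                simp only [Finset.mem_Icc] at hk hk'
                rw [if_neg (by omega), if_neg (by omega), if_neg (by omega),
                    sub_self, zero_mul])]
          have hd2 : Finset.Icc i j = insert i (insert j (Finset.Icc (i+1) (j-1))) := by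
            ext k; simp only [Finset.mem_Icc, Finset.mem_insert]; omega
          have hinot : i ∉ insert j (Finset.Icc (i+1) (j-1)) := by
            simp only [Finset.mem_insert, Finset.mem_Icc]; omega
          have hjnot : j ∉ Finset.Icc (i+1) (j-1) := by
            simp only [Finset.mem_Icc]; omega
          rw [hd2, Finset.sum_insert hinot, Finset.sum_insert hjnot]
          have hmid : ∑ k ∈ Finset.Icc (i+1) (j-1),
              ((if k = j then (-1:ℤ) else if k = i then A i + 1
               else if i < k ∧ k < j then 0 else A k) - A k) * 2 ^ (n - k)
              = -(2 ^ (n - i) - 2 ^ (n - j) * 2) := by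
            rw [Finset.sum_congr rfl (fun k hk => (by
              simp only [Finset.mem_Icc] at hk
              rw [if_neg (by omega), if_neg (by omega), if_pos (by omega),
                  hmax k (by omega) (by omega)]
              ring : ((if k = j then (-1:ℤ) else if k = i then A i + 1
               else if i < k ∧ k < j then 0 else A k) - A k) * 2 ^ (n - k)
                = -((2:ℤ) ^ (n - k))))]
            rw [Finset.sum_neg_distrib]
            have hg := exb_geom n i (j-1) (by omega) (by omega)
            have he : n - (j - 1) = (n - j) + 1 := by omega
            rw [he, pow_succ] at hg
            rw [hg]
          have hvi : (if i = j then (-1:ℤ) else if i = i then A i + 1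
               else if i < i ∧ i < j then 0 else A i) = A i + 1 := by
            rw [if_neg (by omega), if_pos rfl]
          have hvj : (if j = j then (-1:ℤ) else if j = i then A i + 1
               else if i < j ∧ j < j then 0 else A j) = -1 := if_pos rfl
          rw [hmid, hvi, hvj, hAj]
          ring
        have hexp : ∀ k ∈ Finset.Icc 1 n,
            ((if k = j then (-1:ℤ) else if k = i then A i + 1
             else if i < k ∧ k < j then 0 else A k) - A k) * 2 ^ (n - k)
            = (if k = j then (-1:ℤ) else if k = i then A i + 1
             else if i < k ∧ k < j then 0 else A k) * 2 ^ (n - k) - A k * 2 ^ (n - k) :=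
          fun k _ => by ring
        rw [Finset.sum_congr rfl hexp, Finset.sum_sub_distrib] at hdiff
        linarith
      rw [hsuff]
  · -- B j = -1
    beta_reduce
    rw [if_pos rfl]
end

section
/- In steady state of the voltage follower SCC, if the same charge Q = ΔV_1·C(1 − e^{−β_1}) = ΔV_2·C(1 − e^{−β_2}) is transferred in both phases with average current I_av = f_s·Q, then the total average power loss P = f_s(E_1 + E_2), with E_i = (ΔV_i)²C(1 − e^{−2β_i})/2, equals I_av²·(1/(2f_sC))·(coth(β_1/2) + coth(β_2/2)). Hence R_eq = (1/(2f_sC))(coth(β_1/2) + coth(β_2/2)). -/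
noncomputable def coth (x : ℝ) : ℝ := Real.cosh x / Real.sinh x

lemma coth_half (β : ℝ) (hβ : 0 < β) :
    coth (β / 2) = (1 + Real.exp (-β)) / (1 - Real.exp (-β)) := by
  have hs : 0 < Real.sinh (β / 2) := Real.sinh_pos_iff.mpr (by linarith)
  have he : Real.exp (-β) < 1 := by
    rw [Real.exp_lt_one_iff]; linarith
  have hx : Real.exp (β / 2) * Real.exp (-(β / 2)) = 1 := by
    rw [← Real.exp_add]; simp
  have hy : Real.exp (-(β / 2)) * Real.exp (-(β / 2)) = Real.exp (-β) := by
    rw [← Real.exp_add]; ring_nf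
  unfold coth
  rw [div_eq_div_iff (ne_of_gt hs) (by linarith), Real.cosh_eq, Real.sinh_eq]
  linear_combination (-Real.exp (-(β / 2))) * hx + Real.exp (β / 2) * hy

/-- Equivalent resistor of the voltage follower SCC: with ΔV_i = I_av/(f_s C (1-e^{-β_i}))
and E_i = (ΔV_i)² C (1-e^{-2β_i})/2, the power f_s(E₁+E₂) equals
I_av² · (1/(2 f_s C)) · (coth(β₁/2) + coth(β₂/2)). -/
theorem scc_equivalent_resistor (β1 β2 fs C Iav : ℝ)
    (hβ1 : 0 < β1) (hβ2 : 0 < β2) (hfs : 0 < fs) (hC : 0 < C)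
    (ΔV1 ΔV2 E1 E2 : ℝ)
    (hΔV1 : ΔV1 = Iav / (fs * C * (1 - Real.exp (-β1))))
    (hΔV2 : ΔV2 = Iav / (fs * C * (1 - Real.exp (-β2))))
    (hE1 : E1 = ΔV1 ^ 2 * C * (1 - Real.exp (-2 * β1)) / 2)
    (hE2 : E2 = ΔV2 ^ 2 * C * (1 - Real.exp (-2 * β2)) / 2) :
    fs * (E1 + E2) = Iav ^ 2 * (1 / (2 * fs * C)) * (coth (β1 / 2) + coth (β2 / 2)) := by
  have he1 : Real.exp (-β1) < 1 := by rw [Real.exp_lt_one_iff]; linarith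
  have he2 : Real.exp (-β2) < 1 := by rw [Real.exp_lt_one_iff]; linarith
  have h1 : Real.exp (-2 * β1) = Real.exp (-β1) * Real.exp (-β1) := by
    rw [← Real.exp_add]; ring_nf
  have h2 : Real.exp (-2 * β2) = Real.exp (-β2) * Real.exp (-β2) := by
    rw [← Real.exp_add]; ring_nf
  have hd1 : (1 : ℝ) - Real.exp (-β1) ≠ 0 := by linarith
  have hd2 : (1 : ℝ) - Real.exp (-β2) ≠ 0 := by linarith
  rw [coth_half β1 hβ1, coth_half β2 hβ2]
  subst hE1 hE2 hΔV1 hΔV2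
  rw [h1, h2]
  field_simp
  ring
end
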